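/- Let A be a unital C*-algebra, α, β, γ real numbers, and a, b elements of the center of A with a*b self-adjoint and α·a*a + β·b*b = γ·1. Then for all x, y ∈ A, αβ·(xa + yb)*(xa + yb) + (βxb − αya)*(βxb − αya) = βγ·x*x + αγ·y*y. -/
import Mathlib

theorem euler_lagrange_cstar {A : Type*} [NormedRing A] [StarRing A] [CStarRing A]
    [NormedAlgebra ℂ A] [CompleteSpace A] [StarModule ℂ A]
    (α β γ : ℝ) (a b : A) (ha : a ∈ Set.center A) (hb : b ∈ Set.center A)
    (hsa : IsSelfAdjoint (star a * b))
    (heq : α • (star a * a) + β • (star b * b) = γ • (1 : A)) :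
    ∀ x y : A,
      (α * β) • (star (x * a + y * b) * (x * a + y * b))
        + star (β • (x * b) - α • (y * a)) * (β • (x * b) - α • (y * a))
      = (β * γ) • (star x * x) + (α * γ) • (star y * y) := by
  intro x y
  have haC : ∀ g : A, a * g = g * a := ha.comm
  have hbC : ∀ g : A, b * g = g * b := hb.comm
  have haC' : ∀ g : A, star a * g = g * star a := by
    intro g
    have := congrArg star (haC (star g))
    simpa using this.symm
  have hbC' : ∀ g : A, star b * g = g * star b := by
    intro g
    have := congrArg star (hbC (star g))
    simpa using this.symm
  have hw : star b * a = star a * b := by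
    have := hsa
    rw [IsSelfAdjoint, star_mul, star_star] at this
    exact this
  have key : ∀ (c d z₁ z₂ : A), (∀ g, c * g = g * c) → (∀ g, d * g = g * d) →
      c * z₁ * (z₂ * d) = c * d * (z₁ * z₂) := by
    intro c d z₁ z₂ hc hd
    rw [← mul_assoc, mul_assoc, mul_assoc, ← mul_assoc z₁ z₂ d, ← hd (z₁ * z₂), ← mul_assoc]
  set u := star a * a with hu
  set v := star b * b with hv
  set w := star a * b with hww
  set X := star x * x with hX
  set Y := star y * y with hY
  set P := star x * y with hP
  set Q := star y * x with hQ
  have e1 : star a * star x * (x * a) = u * X := key _ _ _ _ haC' haC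
  have e2 : star a * star x * (y * b) = w * P := key _ _ _ _ haC' hbC
  have e3 : star b * star y * (x * a) = w * Q := by
    rw [key _ _ _ _ hbC' haC, hw]
  have e4 : star b * star y * (y * b) = v * Y := key _ _ _ _ hbC' hbC
  have e5 : star b * star x * (x * b) = v * X := key _ _ _ _ hbC' hbC
  have e6 : star b * star x * (y * a) = w * P := by
    rw [key _ _ _ _ hbC' haC, hw]
  have e7 : star a * star y * (x * b) = w * Q := key _ _ _ _ haC' hbC
  have e8 : star a * star y * (y * a) = u * Y := key _ _ _ _ haC' haC
  have hXe : α • (u * X) + β • (v * X) = γ • X := by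
    have := congrArg (· * X) heq
    simpa [add_mul, smul_mul_assoc] using this
  have hYe : α • (u * Y) + β • (v * Y) = γ • Y := by
    have := congrArg (· * Y) heq
    simpa [add_mul, smul_mul_assoc] using this
  simp only [star_add, star_sub, star_smul, star_mul, mul_add, add_mul, sub_mul, mul_sub,
    smul_mul_assoc, mul_smul_comm, smul_add, smul_sub, smul_smul, star_trivial,
    e1, e2, e3, e4, e5, e6, e7, e8]
  rw [show (β * γ) • X = β • (γ • X) from (mul_smul β γ X),
      show (α * γ) • Y = α • (γ • Y) from (mul_smul α γ Y),
      ← hXe, ← hYe]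
  module
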